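/- For all real a < 0 and T > 0: 4aT − e^{4aT} + e^{2aT}(8aT − 4) + 5 < 0. -/

import Mathlib

open Real in
/-- `sinh v > v` for `v > 0`. -/
lemma aux_sinh_gt (v : ℝ) (hv : 0 < v) : 2 * v < Real.exp v - Real.exp (-v) := by
  have h1 : 1 + v + v ^ 2 / 2 ≤ Real.exp v := Real.quadratic_le_exp_of_nonneg hv.le
  have h2 : Real.exp (-v) = (Real.exp v)⁻¹ := Real.exp_neg v
  have h3 : 0 < Real.exp v := Real.exp_pos v
  rw [h2]
  have h5 : (Real.exp v)⁻¹ * Real.exp v = 1 := inv_mul_cancel₀ h3.ne'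
  nlinarith [h1, h5, h3, hv, sq_nonneg (v ^ 2), mul_pos hv hv,
    mul_nonneg (sub_nonneg.2 h1) h3.le, mul_nonneg (sub_nonneg.2 h1) hv.le,
    mul_nonneg (mul_nonneg (sub_nonneg.2 h1) hv.le) hv.le]

/-- Derivative positivity: `2 - 2 e^{2u} + 4 u e^u > 0` for `u < 0`. -/
lemma aux_deriv_pos (u : ℝ) (hu : u < 0) :
    0 < 2 - 2 * Real.exp (2 * u) + 4 * u * Real.exp u := by
  have h := aux_sinh_gt (-u) (by linarith)
  have e1 : Real.exp (- -u) = Real.exp u := by norm_num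
  rw [e1] at h
  have h2 : Real.exp (2 * u) = Real.exp u * Real.exp u := by
    rw [← Real.exp_add]; ring_nf
  have h3 : 0 < Real.exp u := Real.exp_pos u
  -- h : 2 * (-u) < exp (-u) - exp u, multiply by exp u > 0, using exp(-u)*exp u = 1
  have h4 : Real.exp (-u) * Real.exp u = 1 := by
    rw [← Real.exp_add]; norm_num
  nlinarith [mul_pos h3 h3]

lemma aux_main (u : ℝ) (hu : u < 0) :
    2 * u - Real.exp (2 * u) + Real.exp u * (4 * u - 4) + 5 < 0 := by
  set F : ℝ → ℝ := fun x => 2 * x - Real.exp (2 * x) + Real.exp x * (4 * x - 4) + 5 with hF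
  have hderiv : ∀ x : ℝ, HasDerivAt F
      (2 - 2 * Real.exp (2 * x) + 4 * x * Real.exp x) x := by
    intro x
    have h1 : HasDerivAt (fun y : ℝ => 2 * y) 2 x := by
      simpa using (hasDerivAt_id x).const_mul 2
    have h2 : HasDerivAt (fun y : ℝ => Real.exp (2 * y)) (Real.exp (2 * x) * 2) x := by
      have := (Real.hasDerivAt_exp (2 * x)).comp x
        (by simpa using (hasDerivAt_id x).const_mul 2)
      simpa [Function.comp_def] using this
    have h3 : HasDerivAt (fun y : ℝ => Real.exp y * (4 * y - 4))
        (Real.exp x * (4 * x - 4) + Real.exp x * 4) x := by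
      have ha : HasDerivAt (fun y : ℝ => 4 * y - 4) 4 x := by
        simpa using ((hasDerivAt_id x).const_mul 4).sub_const 4
      exact (Real.hasDerivAt_exp x).mul ha
    have := ((h1.sub h2).add h3).add_const 5
    refine this.congr_deriv ?_
    ring
  have hmono : StrictMonoOn F (Set.Iic 0) := by
    apply strictMonoOn_of_deriv_pos (convex_Iic 0)
    · exact fun x _ => (hderiv x).differentiableAt.continuousAt.continuousWithinAt
    · intro x hx
      rw [interior_Iic] at hx
      rw [(hderiv x).deriv]
      exact aux_deriv_pos x hx
  have h0 : F 0 = 0 := by simp [hF]; norm_num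
  have := hmono (Set.mem_Iic.mpr hu.le) (Set.mem_Iic.mpr le_rfl) hu
  rw [h0] at this
  exact this

/-- For all real `a < 0` and `T > 0`: `4aT − e^{4aT} + e^{2aT}(8aT − 4) + 5 < 0`. -/
theorem stmt_13 (a T : ℝ) (ha : a < 0) (hT : 0 < T) :
    4 * a * T - Real.exp (4 * a * T) + Real.exp (2 * a * T) * (8 * a * T - 4) + 5 < 0 := by
  have hu : 2 * a * T < 0 := by nlinarith
  have := aux_main (2 * a * T) hu
  have e1 : 2 * (2 * a * T) = 4 * a * T := by ring
  rw [e1] at this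
  linarith [this]
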